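/- There exists a constant C > 0 such that the following holds. Let a < b and η > 0, and suppose p, v, w ∈ ℝ² and A ∈ ℝ satisfy |v − w| ≤ η, |p − (b−a)v| ≤ η(b−a), and |A| ≤ η(η + |v|)(b−a)². Then there is a C¹ curve σ: [a,b] → ℝ² such that: σ(a) = 0 and σ(b) = p; σ'(a) = v and σ'(b) = w; (1/2)∫_a^b (σ₁σ₂' − σ₂σ₁') = A; and |σ'(t) − v| ≤ Cη for all t ∈ [a,b]. -/

import Mathlib

open MeasureTheory Set

private def Pol (c1 c2 c3 c4 c5 c6 c7 c8 c9 y : ℝ) : ℝ :=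
  c1*y + c2*y^2 + c3*y^3 + c4*y^4 + c5*y^5 + c6*y^6 + c7*y^7 + c8*y^8 + c9*y^9

private def dPol (c1 c2 c3 c4 c5 c6 c7 c8 c9 y : ℝ) : ℝ :=
  c1 + 2*c2*y + 3*c3*y^2 + 4*c4*y^3 + 5*c5*y^4 + 6*c6*y^5 + 7*c7*y^6 + 8*c8*y^7 + 9*c9*y^8

private lemma hasDerivAt_Pol (c1 c2 c3 c4 c5 c6 c7 c8 c9 x : ℝ) :
    HasDerivAt (fun y => Pol c1 c2 c3 c4 c5 c6 c7 c8 c9 y)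
      (dPol c1 c2 c3 c4 c5 c6 c7 c8 c9 x) x := by
  have h :=
    (((((((((hasDerivAt_pow 1 x).const_mul c1).add ((hasDerivAt_pow 2 x).const_mul c2)).add
      ((hasDerivAt_pow 3 x).const_mul c3)).add ((hasDerivAt_pow 4 x).const_mul c4)).add
      ((hasDerivAt_pow 5 x).const_mul c5)).add ((hasDerivAt_pow 6 x).const_mul c6)).add
      ((hasDerivAt_pow 7 x).const_mul c7)).add ((hasDerivAt_pow 8 x).const_mul c8)).add
      ((hasDerivAt_pow 9 x).const_mul c9)
  have hf : (fun y : ℝ => c1*y^1 + c2*y^2 + c3*y^3 + c4*y^4 + c5*y^5 + c6*y^6 + c7*y^7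
      + c8*y^8 + c9*y^9) = fun y => Pol c1 c2 c3 c4 c5 c6 c7 c8 c9 y := by
    funext y; unfold Pol; ring
  have h' : HasDerivAt (fun y : ℝ => c1*y^1 + c2*y^2 + c3*y^3 + c4*y^4 + c5*y^5 + c6*y^6 + c7*y^7
      + c8*y^8 + c9*y^9) _ x := h
  rw [hf] at h'
  convert h' using 1
  unfold dPol; push_cast; ring

private lemma absLeAux (s c : ℝ) (hc : 0 ≤ c) (hs : s^2 ≤ c^2) : |s| ≤ c := by
  rw [abs_le]
  constructor <;> nlinarith [sq_nonneg (s+c), sq_nonneg (s-c)]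

private lemma eqOneOfSq (x : ℝ) (h0 : 0 ≤ x) (h : x^2 = 1) : x = 1 := by
  rcases mul_eq_zero.1 (show (x-1)*(x+1) = 0 by linear_combination h) with h'|h'
  · linarith
  · linarith

private lemma coordSqLe (z : EuclideanSpace ℝ (Fin 2)) (c : ℝ) (hc : 0 ≤ c)
    (hz : ‖z‖ ≤ c) : z 0^2 + z 1^2 ≤ c^2 := by
  have h : ‖z‖^2 = z 0^2 + z 1^2 := by
    rw [EuclideanSpace.norm_eq, Real.sq_sqrt (Finset.sum_nonneg fun i _ => sq_nonneg _)]
    simp [Fin.sum_univ_two, sq_abs]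
  nlinarith [norm_nonneg z]

set_option maxHeartbeats 1600000 in
/-- There is a universal constant `C` such that, given boundary data `p, v, w` and a
prescribed signed area `A` compatible at scale `η`, one can find a C¹ curve
`σ : [a,b] → ℝ²` with `σ(a) = 0`, `σ(b) = p`, `σ'(a) = v`, `σ'(b) = w`, sweeping the
signed area `A`, and with `|σ'(t) − v| ≤ Cη`. -/
theorem plane_curve_with_prescribed_area :
    ∃ C : ℝ, 0 < C ∧
      ∀ (a b η : ℝ) (p v w : EuclideanSpace ℝ (Fin 2)) (A : ℝ),
        a < b → 0 < η →
        ‖v - w‖ ≤ η →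
        ‖p - (b - a) • v‖ ≤ η * (b - a) →
        |A| ≤ η * (η + ‖v‖) * (b - a) ^ 2 →
        ∃ σ σ' : ℝ → EuclideanSpace ℝ (Fin 2),
          (∀ t ∈ Set.Icc a b, HasDerivWithinAt σ (σ' t) (Set.Icc a b) t) ∧
          ContinuousOn σ' (Set.Icc a b) ∧
          σ a = 0 ∧ σ b = p ∧ σ' a = v ∧ σ' b = w ∧
          (1 / 2) * (∫ t in a..b, (σ t 0 * σ' t 1 - σ t 1 * σ' t 0)) = A ∧
          ∀ t ∈ Set.Icc a b, ‖σ' t - v‖ ≤ C * η := by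
  refine ⟨3000, by norm_num, ?_⟩
  intro a b η p v w A hab hη hvw hp hA
  set L := b - a with hLdef
  have hL : 0 < L := sub_pos.2 hab
  have hLne : L ≠ 0 := ne_of_gt hL
  clear_value L
  have hnorm_sq : ∀ z : EuclideanSpace ℝ (Fin 2), ‖z‖^2 = z 0^2 + z 1^2 := by
    intro z
    rw [EuclideanSpace.norm_eq, Real.sq_sqrt (Finset.sum_nonneg fun i _ => sq_nonneg _)]
    simp [Fin.sum_univ_two, sq_abs]
  set r := ‖v‖ with hrdef
  have hr0 : 0 ≤ r := norm_nonneg v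
  clear_value r
  obtain ⟨e0, e1, hee, hv0, hv1⟩ :
      ∃ e0 e1 : ℝ, e0^2 + e1^2 = 1 ∧ v 0 = r * e0 ∧ v 1 = r * e1 := by
    by_cases hv : v = 0
    · refine ⟨1, 0, by norm_num, ?_, ?_⟩ <;> simp [hv, hrdef]
    · have hrpos : 0 < r := by simpa [hrdef] using norm_pos_iff.2 hv
      have hrne : r ≠ 0 := ne_of_gt hrpos
      have h2 : r^2 = v 0 ^2 + v 1 ^2 := by rw [hrdef]; exact hnorm_sq v
      refine ⟨v 0 / r, v 1 / r, ?_,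
        (by rw [mul_comm]; exact (div_mul_cancel₀ _ hrne).symm),
        (by rw [mul_comm]; exact (div_mul_cancel₀ _ hrne).symm)⟩
      rw [div_pow, div_pow, ← add_div, div_eq_one_iff_eq (pow_ne_zero 2 hrne)]
      linarith [h2]
  set u : EuclideanSpace ℝ (Fin 2) := w - v with hudef
  set q : EuclideanSpace ℝ (Fin 2) := p - L • v with hqdef
  have hu_norm : ‖u‖ ≤ η := by rw [hudef, norm_sub_rev]; exact hvw
  have hq_norm : ‖q‖ ≤ η * L := hp
  have hu0 : u 0 = w 0 - v 0 := rfl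
  have hu1 : u 1 = w 1 - v 1 := rfl
  have hq0 : q 0 = p 0 - L * v 0 := rfl
  have hq1 : q 1 = p 1 - L * v 1 := rfl
  clear_value u q
  have hw0 : w 0 = r * e0 + u 0 := by rw [hu0, hv0]; ring
  have hw1 : w 1 = r * e1 + u 1 := by rw [hu1, hv1]; ring
  have hp0 : p 0 = L * (r * e0) + q 0 := by rw [hq0, hv0]; ring
  have hp1 : p 1 = L * (r * e1) + q 1 := by rw [hq1, hv1]; ring
  have hηL : 0 < η * L := mul_pos hη hL
  have hu_sq : (u 0)^2 + (u 1)^2 ≤ η^2 := coordSqLe u η hη.le hu_norm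
  have hq_sq : (q 0)^2 + (q 1)^2 ≤ (η*L)^2 := coordSqLe q (η*L) hηL.le hq_norm
  have habs : ∀ s c : ℝ, 0 ≤ c → s^2 ≤ c^2 → |s| ≤ c := fun s c hc hs => absLeAux s c hc hs
  have hukey : (e0*u 0 + e1*u 1)^2 + (e0*u 1 - e1*u 0)^2
      = (e0^2 + e1^2) * ((u 0)^2 + (u 1)^2) := by ring
  have hqkey : (e0*q 0 + e1*q 1)^2 + (e0*q 1 - e1*q 0)^2
      = (e0^2 + e1^2) * ((q 0)^2 + (q 1)^2) := by ring
  rw [hee, one_mul] at hukey hqkey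
  have hseu : |e0*u 0 + e1*u 1| ≤ η :=
    habs _ _ hη.le (by linarith [sq_nonneg (e0*u 1 - e1*u 0)])
  have hdeu : |e0*u 1 - e1*u 0| ≤ η :=
    habs _ _ hη.le (by linarith [sq_nonneg (e0*u 0 + e1*u 1)])
  have hseq : |e0*q 0 + e1*q 1| ≤ η*L :=
    habs _ _ hηL.le (by linarith [sq_nonneg (e0*q 1 - e1*q 0)])
  have hdeq : |e0*q 1 - e1*q 0| ≤ η*L :=
    habs _ _ hηL.le (by linarith [sq_nonneg (e0*q 0 + e1*q 1)])
  have hdqu : |q 0*u 1 - q 1*u 0| ≤ η^2*L := by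
    refine habs _ _ (mul_nonneg (sq_nonneg η) hL.le) ?_
    have hqukey : (q 0*u 1 - q 1*u 0)^2 + (q 0*u 0 + q 1*u 1)^2
        = ((q 0)^2 + (q 1)^2) * ((u 0)^2 + (u 1)^2) := by ring
    have hmul : ((q 0)^2 + (q 1)^2) * ((u 0)^2 + (u 1)^2) ≤ (η*L)^2 * η^2 :=
      mul_le_mul hq_sq hu_sq (by positivity) (by positivity)
    have he : (η*L)^2 * η^2 = (η^2*L)^2 := by ring
    linarith [sq_nonneg (q 0*u 0 + q 1*u 1)]
  set E0 : ℝ := L^2*(r/6 + 41*η/210)*(e0*u 1 - e1*u 0) + (L/5)*(q 0*u 1 - q 1*u 0)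
    with hE0def
  set Kμ : ℝ := -(L*r)/15 - 41*η*L/315 - (3/35)*(e0*q 0 + e1*q 1)
      + (L/105)*(e0*u 0 + e1*u 1) with hKdef
  have hKneg : Kμ ≤ -(L*(r/15 + η/30)) := by
    rw [hKdef]
    linarith only [(abs_le.1 hseq).1, mul_le_mul_of_nonneg_left (abs_le.1 hseu).2 hL.le,
      hηL.le]
  have hKlt : Kμ < 0 := by
    refine lt_of_le_of_lt hKneg (neg_lt_zero.2 ?_)
    exact mul_pos hL (by linarith)
  have hKne : Kμ ≠ 0 := ne_of_lt hKlt
  have hKabs : L*(r+η)/30 ≤ |Kμ| := by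
    rw [abs_of_neg hKlt]
    linarith only [hKneg, mul_nonneg hL.le hr0]
  have hE0abs : |E0| ≤ (2/5)*η*(η+r)*L^2 := by
    have hc : (0:ℝ) ≤ L^2*(r/6 + 41*η/210) := mul_nonneg (sq_nonneg L) (by linarith)
    rw [hE0def, abs_le]
    constructor <;>
      linarith only [mul_le_mul_of_nonneg_left (abs_le.1 hdeu).1 hc,
        mul_le_mul_of_nonneg_left (abs_le.1 hdeu).2 hc,
        mul_le_mul_of_nonneg_left (abs_le.1 hdqu).1 (by linarith : (0:ℝ) ≤ L/5),
        mul_le_mul_of_nonneg_left (abs_le.1 hdqu).2 (by linarith : (0:ℝ) ≤ L/5),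
        mul_nonneg (mul_nonneg hη.le hr0) (sq_nonneg L), sq_nonneg (η*L)]
  set μ : ℝ := (2*A - E0)/Kμ with hμdef
  clear_value E0 Kμ μ
  have hμabs : |μ| ≤ 72*η*L := by
    have hN : |2*A - E0| ≤ (12/5)*η*(η+r)*L^2 := by
      have h1 : |2*A - E0| ≤ 2*|A| + |E0| := by
        calc |2*A - E0| ≤ |2*A| + |E0| := abs_sub _ _
        _ = 2*|A| + |E0| := by rw [abs_mul]; norm_num
      have hA' : |A| ≤ η * (η + r) * L^2 := hA
      linarith [hE0abs]
    rw [hμdef, abs_div, div_le_iff₀ (abs_pos.2 hKne)]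
    calc |2*A - E0| ≤ (12/5)*η*(η+r)*L^2 := hN
      _ ≤ 72*η*L*(L*(r+η)/30) := le_of_eq (by ring)
      _ ≤ 72*η*L*|Kμ| := by
          apply mul_le_mul_of_nonneg_left hKabs (mul_nonneg (mul_nonneg (by norm_num) hη.le) hL.le)
  set ev : EuclideanSpace ℝ (Fin 2) := (WithLp.equiv 2 (Fin 2 → ℝ)).symm ![e0, e1]
    with hevdef
  set jev : EuclideanSpace ℝ (Fin 2) := (WithLp.equiv 2 (Fin 2 → ℝ)).symm ![-e1, e0]
    with hjevdef
  have hev0 : ev 0 = e0 := rfl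
  have hev1 : ev 1 = e1 := rfl
  have hjev0 : jev 0 = -e1 := rfl
  have hjev1 : jev 1 = e0 := rfl
  clear_value ev jev
  have hev_norm : ‖ev‖ = 1 := by
    refine eqOneOfSq _ (norm_nonneg ev) ?_
    rw [hnorm_sq ev, hev0, hev1]
    linarith [hee]
  have hjev_norm : ‖jev‖ = 1 := by
    refine eqOneOfSq _ (norm_nonneg jev) ?_
    rw [hnorm_sq jev, hjev0, hjev1]
    linarith [hee]
  set C3 : ℝ := L*(1)*(r*(e0*q 1 - e1*q 0)) + L^2*(-1/3)*(r*(e0*u 1 - e1*u 0)) + (μ*L)*(1/3)*(r*(e0^2+e1^2)) with hC3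
  set C4 : ℝ := L*(-1)*(r*(e0*q 1 - e1*q 0)) + L^2*(1/2)*(r*(e0*u 1 - e1*u 0)) + (μ*L)*(-1)*(r*(e0^2+e1^2)) with hC4
  set C5 : ℝ := L*(1/5)*(r*(e0*q 1 - e1*q 0)) + L^2*(-1/5)*(r*(e0*u 1 - e1*u 0)) + (μ*L)*(6/5)*(r*(e0^2+e1^2)) + L*(1/5)*(L*r*(e0*u 1 - e1*u 0) - r*(e0*q 1 - e1*q 0) + (q 0*u 1 - q 1*u 0)) + (41*η*L)*(2)*(-(e0*q 1 - e1*q 0)) + μ*(-4/5)*(L*r*(e0^2+e1^2) + (e0*q 0 + e1*q 1)) + (41*η*L^2)*(-3/5)*(-(e0*u 1 - e1*u 0)) + (μ*L)*(1/5)*(r*(e0^2+e1^2) + (e0*u 0 + e1*u 1)) + (41*η*L*μ)*(-2/5)*(e0^2+e1^2) with hC5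
  set C6 : ℝ := (μ*L)*(-2/3)*(r*(e0^2+e1^2)) + (41*η*L)*(-5)*(-(e0*q 1 - e1*q 0)) + μ*(1)*(L*r*(e0^2+e1^2) + (e0*q 0 + e1*q 1)) + (41*η*L^2)*(5/3)*(-(e0*u 1 - e1*u 0)) + (μ*L)*(-1/3)*(r*(e0^2+e1^2) + (e0*u 0 + e1*u 1)) + (41*η*L*μ)*(4/3)*(e0^2+e1^2) with hC6
  set C7 : ℝ := (μ*L)*(1/7)*(r*(e0^2+e1^2)) + (41*η*L)*(4)*(-(e0*q 1 - e1*q 0)) + μ*(-2/7)*(L*r*(e0^2+e1^2) + (e0*q 0 + e1*q 1)) + (41*η*L^2)*(-11/7)*(-(e0*u 1 - e1*u 0)) + (μ*L)*(1/7)*(r*(e0^2+e1^2) + (e0*u 0 + e1*u 1)) + (41*η*L*μ)*(-12/7)*(e0^2+e1^2) with hC7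
  set C8 : ℝ := (41*η*L)*(-1)*(-(e0*q 1 - e1*q 0)) + (41*η*L^2)*(1/2)*(-(e0*u 1 - e1*u 0)) + (41*η*L*μ)*(1)*(e0^2+e1^2) with hC8
  set C9 : ℝ := (41*η*L*μ)*(-2/9)*(e0^2+e1^2) with hC9

  clear_value C3 C4 C5 C6 C7 C8 C9
  refine ⟨fun t => (L * Pol 1 (-2) 1 0 0 0 0 0 0 ((t-a)/L)) • v
      + (Pol 0 3 (-2) 0 0 0 0 0 0 ((t-a)/L)) • p
      + (L * Pol 0 (-1) 1 0 0 0 0 0 0 ((t-a)/L)) • w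
      + ((41*η*L) * Pol 0 (-1) 4 (-5) 2 0 0 0 0 ((t-a)/L)) • ev
      + (μ * Pol 0 1 (-2) 1 0 0 0 0 0 ((t-a)/L)) • jev,
    fun t => (L * (dPol 1 (-2) 1 0 0 0 0 0 0 ((t-a)/L) * (1/L))) • v
      + (dPol 0 3 (-2) 0 0 0 0 0 0 ((t-a)/L) * (1/L)) • p
      + (L * (dPol 0 (-1) 1 0 0 0 0 0 0 ((t-a)/L) * (1/L))) • w
      + ((41*η*L) * (dPol 0 (-1) 4 (-5) 2 0 0 0 0 ((t-a)/L) * (1/L))) • ev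
      + (μ * (dPol 0 1 (-2) 1 0 0 0 0 0 ((t-a)/L) * (1/L))) • jev,
    ?_, ?_, ?_, ?_, ?_, ?_, ?_, ?_⟩
  · -- HasDerivWithinAt
    intro t _
    apply HasDerivAt.hasDerivWithinAt
    have hs : HasDerivAt (fun t : ℝ => (t - a)/L) (1/L) t := by
      simpa using ((hasDerivAt_id t).sub_const a).div_const L
    have h1 : HasDerivAt (fun t : ℝ => Pol 1 (-2) 1 0 0 0 0 0 0 ((t-a)/L))
        (dPol 1 (-2) 1 0 0 0 0 0 0 ((t-a)/L) * (1/L)) t :=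
      ((hasDerivAt_Pol 1 (-2) 1 0 0 0 0 0 0 ((t-a)/L)).comp t hs :)
    have h2 : HasDerivAt (fun t : ℝ => Pol 0 3 (-2) 0 0 0 0 0 0 ((t-a)/L))
        (dPol 0 3 (-2) 0 0 0 0 0 0 ((t-a)/L) * (1/L)) t :=
      ((hasDerivAt_Pol 0 3 (-2) 0 0 0 0 0 0 ((t-a)/L)).comp t hs :)
    have h3 : HasDerivAt (fun t : ℝ => Pol 0 (-1) 1 0 0 0 0 0 0 ((t-a)/L))
        (dPol 0 (-1) 1 0 0 0 0 0 0 ((t-a)/L) * (1/L)) t :=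
      ((hasDerivAt_Pol 0 (-1) 1 0 0 0 0 0 0 ((t-a)/L)).comp t hs :)
    have h4 : HasDerivAt (fun t : ℝ => Pol 0 (-1) 4 (-5) 2 0 0 0 0 ((t-a)/L))
        (dPol 0 (-1) 4 (-5) 2 0 0 0 0 ((t-a)/L) * (1/L)) t :=
      ((hasDerivAt_Pol 0 (-1) 4 (-5) 2 0 0 0 0 ((t-a)/L)).comp t hs :)
    have h5 : HasDerivAt (fun t : ℝ => Pol 0 1 (-2) 1 0 0 0 0 0 ((t-a)/L))
        (dPol 0 1 (-2) 1 0 0 0 0 0 ((t-a)/L) * (1/L)) t :=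
      ((hasDerivAt_Pol 0 1 (-2) 1 0 0 0 0 0 ((t-a)/L)).comp t hs :)
    exact ((((((h1.const_mul L).smul_const v).add (h2.smul_const p)).add
      ((h3.const_mul L).smul_const w)).add ((h4.const_mul (41*η*L)).smul_const ev)).add
      ((h5.const_mul μ).smul_const jev))
  · -- ContinuousOn
    apply Continuous.continuousOn
    unfold dPol
    fun_prop
  · -- σ a = 0
    norm_num [Pol]
  · -- σ b = p
    have h1 : (b - a)/L = 1 := by rw [← hLdef]; exact div_self hLne
    norm_num [h1, Pol]
  · -- σ' a = v
    norm_num [dPol]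
    field_simp
    simp
  · -- σ' b = w
    have h1 : (b - a)/L = 1 := by rw [← hLdef]; exact div_self hLne
    norm_num [h1, dPol]
    field_simp
    simp
  · -- area
    beta_reduce
    have harea : ∀ t : ℝ,
        ((L * Pol 1 (-2) 1 0 0 0 0 0 0 ((t-a)/L)) • v
      + (Pol 0 3 (-2) 0 0 0 0 0 0 ((t-a)/L)) • p
      + (L * Pol 0 (-1) 1 0 0 0 0 0 0 ((t-a)/L)) • w
      + ((41*η*L) * Pol 0 (-1) 4 (-5) 2 0 0 0 0 ((t-a)/L)) • ev
      + (μ * Pol 0 1 (-2) 1 0 0 0 0 0 ((t-a)/L)) • jev) 0 *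
        ((L * (dPol 1 (-2) 1 0 0 0 0 0 0 ((t-a)/L) * (1/L))) • v
      + (dPol 0 3 (-2) 0 0 0 0 0 0 ((t-a)/L) * (1/L)) • p
      + (L * (dPol 0 (-1) 1 0 0 0 0 0 0 ((t-a)/L) * (1/L))) • w
      + ((41*η*L) * (dPol 0 (-1) 4 (-5) 2 0 0 0 0 ((t-a)/L) * (1/L))) • ev
      + (μ * (dPol 0 1 (-2) 1 0 0 0 0 0 ((t-a)/L) * (1/L))) • jev) 1 -
        ((L * Pol 1 (-2) 1 0 0 0 0 0 0 ((t-a)/L)) • v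
      + (Pol 0 3 (-2) 0 0 0 0 0 0 ((t-a)/L)) • p
      + (L * Pol 0 (-1) 1 0 0 0 0 0 0 ((t-a)/L)) • w
      + ((41*η*L) * Pol 0 (-1) 4 (-5) 2 0 0 0 0 ((t-a)/L)) • ev
      + (μ * Pol 0 1 (-2) 1 0 0 0 0 0 ((t-a)/L)) • jev) 1 *
        ((L * (dPol 1 (-2) 1 0 0 0 0 0 0 ((t-a)/L) * (1/L))) • v
      + (dPol 0 3 (-2) 0 0 0 0 0 0 ((t-a)/L) * (1/L)) • p
      + (L * (dPol 0 (-1) 1 0 0 0 0 0 0 ((t-a)/L) * (1/L))) • w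
      + ((41*η*L) * (dPol 0 (-1) 4 (-5) 2 0 0 0 0 ((t-a)/L) * (1/L))) • ev
      + (μ * (dPol 0 1 (-2) 1 0 0 0 0 0 ((t-a)/L) * (1/L))) • jev) 0
        = dPol 0 0 C3 C4 C5 C6 C7 C8 C9 ((t-a)/L) * (1/L) := by
      intro t
      simp only [PiLp.add_apply, PiLp.smul_apply, smul_eq_mul, hev0, hev1, hjev0, hjev1]
      rw [hv0, hv1, hw0, hw1, hp0, hp1, hC3, hC4, hC5, hC6, hC7, hC8, hC9]
      unfold Pol dPol
      field_simp
      ring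
    have hEq : Set.EqOn
        (fun t => ((L * Pol 1 (-2) 1 0 0 0 0 0 0 ((t-a)/L)) • v
      + (Pol 0 3 (-2) 0 0 0 0 0 0 ((t-a)/L)) • p
      + (L * Pol 0 (-1) 1 0 0 0 0 0 0 ((t-a)/L)) • w
      + ((41*η*L) * Pol 0 (-1) 4 (-5) 2 0 0 0 0 ((t-a)/L)) • ev
      + (μ * Pol 0 1 (-2) 1 0 0 0 0 0 ((t-a)/L)) • jev) 0 *
        ((L * (dPol 1 (-2) 1 0 0 0 0 0 0 ((t-a)/L) * (1/L))) • v
      + (dPol 0 3 (-2) 0 0 0 0 0 0 ((t-a)/L) * (1/L)) • p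
      + (L * (dPol 0 (-1) 1 0 0 0 0 0 0 ((t-a)/L) * (1/L))) • w
      + ((41*η*L) * (dPol 0 (-1) 4 (-5) 2 0 0 0 0 ((t-a)/L) * (1/L))) • ev
      + (μ * (dPol 0 1 (-2) 1 0 0 0 0 0 ((t-a)/L) * (1/L))) • jev) 1 -
        ((L * Pol 1 (-2) 1 0 0 0 0 0 0 ((t-a)/L)) • v
      + (Pol 0 3 (-2) 0 0 0 0 0 0 ((t-a)/L)) • p
      + (L * Pol 0 (-1) 1 0 0 0 0 0 0 ((t-a)/L)) • w
      + ((41*η*L) * Pol 0 (-1) 4 (-5) 2 0 0 0 0 ((t-a)/L)) • ev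
      + (μ * Pol 0 1 (-2) 1 0 0 0 0 0 ((t-a)/L)) • jev) 1 *
        ((L * (dPol 1 (-2) 1 0 0 0 0 0 0 ((t-a)/L) * (1/L))) • v
      + (dPol 0 3 (-2) 0 0 0 0 0 0 ((t-a)/L) * (1/L)) • p
      + (L * (dPol 0 (-1) 1 0 0 0 0 0 0 ((t-a)/L) * (1/L))) • w
      + ((41*η*L) * (dPol 0 (-1) 4 (-5) 2 0 0 0 0 ((t-a)/L) * (1/L))) • ev
      + (μ * (dPol 0 1 (-2) 1 0 0 0 0 0 ((t-a)/L) * (1/L))) • jev) 0)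
        (fun t => dPol 0 0 C3 C4 C5 C6 C7 C8 C9 ((t-a)/L) * (1/L)) (Set.uIcc a b) := fun t _ => harea t
    rw [intervalIntegral.integral_congr hEq]
    have hQd : ∀ t ∈ Set.uIcc a b, HasDerivAt (fun t : ℝ => Pol 0 0 C3 C4 C5 C6 C7 C8 C9 ((t-a)/L))
        (dPol 0 0 C3 C4 C5 C6 C7 C8 C9 ((t-a)/L) * (1/L)) t := by
      intro t _
      have hs' : HasDerivAt (fun t : ℝ => (t - a)/L) (1/L) t := by
        simpa using ((hasDerivAt_id t).sub_const a).div_const L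
      exact ((hasDerivAt_Pol 0 0 C3 C4 C5 C6 C7 C8 C9 ((t-a)/L)).comp t hs' :)
    have hint : IntervalIntegrable (fun t : ℝ => dPol 0 0 C3 C4 C5 C6 C7 C8 C9 ((t-a)/L) * (1/L))
        volume a b := by
      apply Continuous.intervalIntegrable
      unfold dPol
      fun_prop
    rw [intervalIntegral.integral_eq_sub_of_hasDerivAt hQd hint]
    rw [show (b - a)/L = 1 from by rw [← hLdef]; exact div_self hLne]
    rw [show (a - a)/L = 0 from by rw [sub_self, zero_div]]
    have hP1 : Pol 0 0 C3 C4 C5 C6 C7 C8 C9 1 = C3+C4+C5+C6+C7+C8+C9 := by unfold Pol; ring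
    have hP0 : Pol 0 0 C3 C4 C5 C6 C7 C8 C9 0 = 0 := by unfold Pol; ring
    rw [hP1, hP0]
    have hsum : C3+C4+C5+C6+C7+C8+C9 = E0 + μ * Kμ := by
      rw [hC3, hC4, hC5, hC6, hC7, hC8, hC9, hE0def, hKdef]
      linear_combination (μ * (-(L*r)/15 - 41*η*L/315)) * hee
    have hμK : μ * Kμ = 2*A - E0 := by rw [hμdef]; exact div_mul_cancel₀ _ hKne
    rw [hsum]
    linarith only [hμK]
  · -- derivative bound
    intro t ht
    clear hC3 hC4 hC5 hC6 hC7 hC8 hC9 hE0def hKdef hμdef hE0abs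
    beta_reduce
    have hx0 : 0 ≤ (t - a)/L := div_nonneg (by linarith [ht.1]) hL.le
    have hx1 : (t - a)/L ≤ 1 := by
      rw [div_le_one hL, hLdef]
      linarith [ht.2]
    have hxp2 : ((t-a)/L)^2 ≤ 1 := pow_le_one₀ hx0 hx1
    have hxp3 : ((t-a)/L)^3 ≤ 1 := pow_le_one₀ hx0 hx1
    have hxp4 : ((t-a)/L)^4 ≤ 1 := pow_le_one₀ hx0 hx1
    have hxn2 : 0 ≤ ((t-a)/L)^2 := by positivity
    have hxn3 : 0 ≤ ((t-a)/L)^3 := by positivity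
    have hxn4 : 0 ≤ ((t-a)/L)^4 := by positivity
    have hb2 : |dPol 0 3 (-2) 0 0 0 0 0 0 ((t-a)/L)| ≤ 12 := by
      unfold dPol
      rw [abs_le]
      constructor <;> linarith only [hx0, hx1, hxp2, hxn2]
    have hb3 : |dPol 0 (-1) 1 0 0 0 0 0 0 ((t-a)/L)| ≤ 5 := by
      unfold dPol
      rw [abs_le]
      constructor <;> linarith only [hx0, hx1, hxp2, hxn2]
    have hb4 : |dPol 0 (-1) 4 (-5) 2 0 0 0 0 ((t-a)/L)| ≤ 44 := by
      unfold dPol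
      rw [abs_le]
      constructor <;>
        linarith only [hx0, hx1, hxp2, hxn2, hxp3, hxn3, hxp4, hxn4]
    have hb5 : |dPol 0 1 (-2) 1 0 0 0 0 0 ((t-a)/L)| ≤ 12 := by
      unfold dPol
      rw [abs_le]
      constructor <;> linarith only [hx0, hx1, hxp2, hxn2, hxp3, hxn3]
    have hdecomp : ((L * (dPol 1 (-2) 1 0 0 0 0 0 0 ((t-a)/L) * (1/L))) • v
      + (dPol 0 3 (-2) 0 0 0 0 0 0 ((t-a)/L) * (1/L)) • p
      + (L * (dPol 0 (-1) 1 0 0 0 0 0 0 ((t-a)/L) * (1/L))) • w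
      + ((41*η*L) * (dPol 0 (-1) 4 (-5) 2 0 0 0 0 ((t-a)/L) * (1/L))) • ev
      + (μ * (dPol 0 1 (-2) 1 0 0 0 0 0 ((t-a)/L) * (1/L))) • jev) - v =
        (dPol 0 3 (-2) 0 0 0 0 0 0 ((t-a)/L) * (1/L)) • q
        + (dPol 0 (-1) 1 0 0 0 0 0 0 ((t-a)/L)) • u
        + ((41*η) * dPol 0 (-1) 4 (-5) 2 0 0 0 0 ((t-a)/L)) • ev
        + ((μ * (1/L)) * dPol 0 1 (-2) 1 0 0 0 0 0 ((t-a)/L)) • jev := by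
      rw [hqdef, hudef]
      ext i
      fin_cases i <;>
        · simp only [PiLp.add_apply, PiLp.sub_apply, PiLp.smul_apply, smul_eq_mul,
            Fin.isValue, Fin.zero_eta, Fin.mk_one]
          unfold dPol
          field_simp
          ring
    rw [hdecomp]
    have hn1 : ‖(dPol 0 3 (-2) 0 0 0 0 0 0 ((t-a)/L) * (1/L)) • q‖ ≤ 12 * η := by
      rw [norm_smul, Real.norm_eq_abs, abs_mul, abs_of_pos (one_div_pos.2 hL)]
      calc |dPol 0 3 (-2) 0 0 0 0 0 0 ((t-a)/L)| * (1/L) * ‖q‖ ≤ 12 * (1/L) * (η * L) := by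
            apply mul_le_mul (mul_le_mul_of_nonneg_right hb2 (one_div_pos.2 hL).le) hq_norm
              (norm_nonneg q) (mul_nonneg (by norm_num) (one_div_pos.2 hL).le)
        _ = 12 * η := by field_simp
    have hn2 : ‖(dPol 0 (-1) 1 0 0 0 0 0 0 ((t-a)/L)) • u‖ ≤ 5 * η := by
      rw [norm_smul, Real.norm_eq_abs]
      exact mul_le_mul hb3 hu_norm (norm_nonneg u) (by norm_num)
    have hn3 : ‖((41*η) * dPol 0 (-1) 4 (-5) 2 0 0 0 0 ((t-a)/L)) • ev‖ ≤ 1804 * η := by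
      rw [norm_smul, Real.norm_eq_abs, hev_norm, mul_one, abs_mul,
        abs_of_pos (by linarith [hη] : (0:ℝ) < 41*η)]
      calc 41*η*|dPol 0 (-1) 4 (-5) 2 0 0 0 0 ((t-a)/L)| ≤ 41*η*44 :=
            mul_le_mul_of_nonneg_left hb4 (by linarith : (0:ℝ) ≤ 41*η)
        _ = 1804 * η := by ring
    have hn4 : ‖((μ * (1/L)) * dPol 0 1 (-2) 1 0 0 0 0 0 ((t-a)/L)) • jev‖ ≤ 864 * η := by
      rw [norm_smul, Real.norm_eq_abs, hjev_norm, mul_one, abs_mul, abs_mul,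
        abs_of_pos (one_div_pos.2 hL)]
      calc |μ| * (1/L) * |dPol 0 1 (-2) 1 0 0 0 0 0 ((t-a)/L)| ≤ (72*η*L) * (1/L) * 12 := by
            apply mul_le_mul _ hb5 (abs_nonneg _)
              (mul_nonneg (mul_nonneg (mul_nonneg (by norm_num) hη.le) hL.le) (one_div_pos.2 hL).le)
            exact mul_le_mul_of_nonneg_right hμabs (one_div_pos.2 hL).le
        _ = 864 * η := by field_simp; ring
    calc ‖(dPol 0 3 (-2) 0 0 0 0 0 0 ((t-a)/L) * (1/L)) • q
        + (dPol 0 (-1) 1 0 0 0 0 0 0 ((t-a)/L)) • u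
        + ((41*η) * dPol 0 (-1) 4 (-5) 2 0 0 0 0 ((t-a)/L)) • ev
        + ((μ * (1/L)) * dPol 0 1 (-2) 1 0 0 0 0 0 ((t-a)/L)) • jev‖
        ≤ ‖(dPol 0 3 (-2) 0 0 0 0 0 0 ((t-a)/L) * (1/L)) • q
        + (dPol 0 (-1) 1 0 0 0 0 0 0 ((t-a)/L)) • u
        + ((41*η) * dPol 0 (-1) 4 (-5) 2 0 0 0 0 ((t-a)/L)) • ev‖
        + ‖((μ * (1/L)) * dPol 0 1 (-2) 1 0 0 0 0 0 ((t-a)/L)) • jev‖ := norm_add_le _ _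
      _ ≤ ‖(dPol 0 3 (-2) 0 0 0 0 0 0 ((t-a)/L) * (1/L)) • q
        + (dPol 0 (-1) 1 0 0 0 0 0 0 ((t-a)/L)) • u‖
        + ‖((41*η) * dPol 0 (-1) 4 (-5) 2 0 0 0 0 ((t-a)/L)) • ev‖
        + ‖((μ * (1/L)) * dPol 0 1 (-2) 1 0 0 0 0 0 ((t-a)/L)) • jev‖ := by
          gcongr
          exact norm_add_le _ _
      _ ≤ ‖(dPol 0 3 (-2) 0 0 0 0 0 0 ((t-a)/L) * (1/L)) • q‖
        + ‖(dPol 0 (-1) 1 0 0 0 0 0 0 ((t-a)/L)) • u‖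
        + ‖((41*η) * dPol 0 (-1) 4 (-5) 2 0 0 0 0 ((t-a)/L)) • ev‖
        + ‖((μ * (1/L)) * dPol 0 1 (-2) 1 0 0 0 0 0 ((t-a)/L)) • jev‖ := by
          gcongr
          exact norm_add_le _ _
      _ ≤ 3000 * η := by linarith only [hn1, hn2, hn3, hn4, hη.le]
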